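/- Trapping on tails: Let D ≥ 3. There exist constants δ > 0 and C > 0 with the property: if v ∈ 𝓔 is radial and for some R > 0 one has ‖v‖_{𝓔(R)} ≤ δ (where ‖v‖²_{𝓔(R)} = ∫_R^∞ (|∂_r v|² + |v|²/r²) r^{D-1} dr), then the exterior nonlinear energy satisfies E(v; R, ∞) := ∫_R^∞ ( |∂_r v|²/2 − ((D-2)/(2D))|v|^{2D/(D-2)} ) r^{D-1} dr ≥ C ‖v‖²_{𝓔(R)}. -/

import Mathlib

open Real MeasureTheory Set

noncomputable section

/-- The squared exterior energy norm `‖v‖²_{𝓔(R)} = ∫_R^∞ (|∂_r v|² + |v|²/r²) r^{D-1} dr`. -/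
def extNormSq (D : ℕ) (v : ℝ → ℂ) (R : ℝ) : ℝ :=
  ∫ r in Ioi R, (‖deriv v r‖ ^ 2 + ‖v r‖ ^ 2 / r ^ 2) * r ^ ((D : ℝ) - 1)

/-- The exterior nonlinear energy
`E(v; R, ∞) = ∫_R^∞ (|∂_r v|²/2 − ((D-2)/(2D))|v|^{2D/(D-2)}) r^{D-1} dr`. -/
def extNlEnergy (D : ℕ) (v : ℝ → ℂ) (R : ℝ) : ℝ :=
  ∫ r in Ioi R,
    (‖deriv v r‖ ^ 2 / 2 - (((D : ℝ) - 2) / (2 * (D : ℝ))) *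
      ‖v r‖ ^ (2 * (D : ℝ) / ((D : ℝ) - 2))) * r ^ ((D : ℝ) - 1)

namespace Stmt4Aux

/-- kinetic density -/
def F1 (D : ℕ) (v : ℝ → ℂ) (r : ℝ) : ℝ := ‖deriv v r‖^2 * r ^ ((D:ℝ)-1)
/-- hardy density -/
def F2 (D : ℕ) (v : ℝ → ℂ) (r : ℝ) : ℝ := ‖v r‖^2 * r ^ ((D:ℝ)-3)
/-- |v|^2 r^{d-2} -/
def Gf (D : ℕ) (v : ℝ → ℂ) (r : ℝ) : ℝ :=
  ((v r).re*(v r).re + (v r).im*(v r).im) * r ^ ((D:ℝ)-2)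
/-- its derivative -/
def GD (D : ℕ) (v : ℝ → ℂ) (r : ℝ) : ℝ :=
  ((deriv v r).re*(v r).re + (v r).re*(deriv v r).re +
      ((deriv v r).im*(v r).im + (v r).im*(deriv v r).im)) * r^((D:ℝ)-2)
  + ((v r).re*(v r).re + (v r).im*(v r).im) * (((D:ℝ)-2) * r^((D:ℝ)-2-1))

lemma normsq (z : ℂ) : z.re*z.re + z.im*z.im = ‖z‖^2 := by
  rw [Complex.sq_norm, Complex.normSq_apply]

lemma Gf_eq (D : ℕ) (v : ℝ → ℂ) (r : ℝ) : Gf D v r = ‖v r‖^2 * r^((D:ℝ)-2) := by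
  rw [Gf, normsq]

lemma F1_nonneg (D : ℕ) (v : ℝ → ℂ) {r : ℝ} (hr : 0 < r) : 0 ≤ F1 D v r := by
  have := Real.rpow_nonneg hr.le ((D:ℝ)-1)
  rw [F1]; positivity

lemma F2_nonneg (D : ℕ) (v : ℝ → ℂ) {r : ℝ} (hr : 0 < r) : 0 ≤ F2 D v r := by
  have := Real.rpow_nonneg hr.le ((D:ℝ)-3)
  rw [F2]; positivity

lemma Gf_nonneg (D : ℕ) (v : ℝ → ℂ) {r : ℝ} (hr : 0 < r) : 0 ≤ Gf D v r := by
  rw [Gf_eq]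
  have := Real.rpow_nonneg hr.le ((D:ℝ)-2)
  positivity

lemma hasDerivAt_Gf {v : ℝ → ℂ} (D : ℕ) (hv : DifferentiableOn ℝ v (Ioi 0)) {r : ℝ}
    (hr : 0 < r) : HasDerivAt (Gf D v) (GD D v r) r := by
  have hvr : HasDerivAt v (deriv v r) r :=
    (hv.differentiableAt (Ioi_mem_nhds hr)).hasDerivAt
  have hre : HasDerivAt (fun t => (v t).re) ((deriv v r).re) r :=
    Complex.reCLM.hasFDerivAt.comp_hasDerivAt r hvr
  have him : HasDerivAt (fun t => (v t).im) ((deriv v r).im) r :=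
    Complex.imCLM.hasFDerivAt.comp_hasDerivAt r hvr
  have hrp : HasDerivAt (fun x : ℝ => x ^ ((D:ℝ)-2)) (((D:ℝ)-2) * r ^ ((D:ℝ)-2-1)) r :=
    Real.hasDerivAt_rpow_const (Or.inl hr.ne')
  have := ((hre.mul hre).add (him.mul him)).mul hrp
  exact this

/-- weighted AM-GM for the cross term -/
lemma cross_abs (D : ℕ) (v : ℝ → ℂ) {r ν μ : ℝ} (hr : 0 < r) (hν : 0 < ν) (hμ : 0 < μ)
    (hνμ : ν * μ = 1) :
    |GD D v r - (((D:ℝ)-2) * F2 D v r)| ≤ ν * F2 D v r + μ * F1 D v r := by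
  have hsecond : ((v r).re*(v r).re + (v r).im*(v r).im) * (((D:ℝ)-2) * r^((D:ℝ)-2-1))
      = ((D:ℝ)-2) * F2 D v r := by
    rw [normsq, F2, show ((D:ℝ)-2-1) = ((D:ℝ)-3) by ring]; ring
  rw [GD, hsecond, add_sub_cancel_right]
  set a := (v r).re with ha
  set b := (deriv v r).re with hb
  set c := (v r).im with hc
  set e := (deriv v r).im with he
  have hF1 : F1 D v r = (b*b + e*e) * r ^ ((D:ℝ)-1) := by
    rw [F1, ← normsq]
  have hF2 : F2 D v r = (a*a + c*c) * r ^ ((D:ℝ)-3) := by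
    rw [F2, ← normsq]
  set P := r ^ (((D:ℝ)-1)/2) with hP
  set Q := r ^ (((D:ℝ)-3)/2) with hQ
  have hP0 : 0 ≤ P := Real.rpow_nonneg hr.le _
  have hQ0 : 0 ≤ Q := Real.rpow_nonneg hr.le _
  have hPQ : r ^ ((D:ℝ)-2) = Q * P := by
    rw [hP, hQ, ← Real.rpow_add hr]; congr 1; ring
  have hPP : r ^ ((D:ℝ)-1) = P * P := by
    rw [hP, ← Real.rpow_add hr]; congr 1; ring
  have hQQ : r ^ ((D:ℝ)-3) = Q * Q := by
    rw [hQ, ← Real.rpow_add hr]; congr 1; ring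
  rw [hF1, hF2, hPQ, hPP, hQQ]
  clear_value a b c e P Q
  clear hsecond hF1 hF2 hPQ hPP hQQ ha hb hc he hP hQ hr
  have main : ∀ x y : ℝ, 2*(x*y)*(Q*P) ≤ ν*(x*x*(Q*Q)) + μ*(y*y*(P*P)) := by
    intro x y
    have expand : ν * (ν*(x*x*(Q*Q)) + μ*(y*y*(P*P))) - ν*(2*(x*y)*(Q*P))
        = (ν*(x*Q) - y*P)^2 := by linear_combination (y*y*P*P) * hνμ
    have h1 : ν * (2*(x*y)*(Q*P)) ≤ ν * (ν*(x*x*(Q*Q)) + μ*(y*y*(P*P))) := by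
      nlinarith [sq_nonneg (ν*(x*Q) - y*P)]
    exact le_of_mul_le_mul_left h1 hν
  rw [abs_le]
  constructor
  · nlinarith [main (-a) b, main (-c) e]
  · nlinarith [main a b, main c e]

lemma F2_eq_Gf (D : ℕ) (v : ℝ → ℂ) {r : ℝ} (hr : 0 < r) : F2 D v r = Gf D v r * r⁻¹ := by
  rw [F2, Gf_eq, ← Real.rpow_neg_one r, mul_assoc, ← Real.rpow_add hr]
  congr 1
  ring

end Stmt4Aux

open Stmt4Aux


set_option maxHeartbeats 2000000 in
open Filter in
/-- Trapping on tails: there are `δ, C > 0` such that whenever `‖v‖_{𝓔(R)} ≤ δ` for some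
`R > 0`, the exterior nonlinear energy satisfies `E(v; R,∞) ≥ C ‖v‖²_{𝓔(R)}`. -/
theorem stmt4 (D : ℕ) (hD : 3 ≤ D) :
    ∃ δ > (0 : ℝ), ∃ C > (0 : ℝ), ∀ (v : ℝ → ℂ) (R : ℝ), 0 < R →
      DifferentiableOn ℝ v (Ioi 0) →
      IntegrableOn (fun r => (‖deriv v r‖ ^ 2 + ‖v r‖ ^ 2 / r ^ 2) * r ^ ((D : ℝ) - 1))
        (Ioi R) →
      IntegrableOn (fun r => ‖v r‖ ^ (2 * (D : ℝ) / ((D : ℝ) - 2)) * r ^ ((D : ℝ) - 1))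
        (Ioi R) →
      Real.sqrt (extNormSq D v R) ≤ δ →
      extNlEnergy D v R ≥ C * extNormSq D v R := by
  have hd3 : (3:ℝ) ≤ (D:ℝ) := by exact_mod_cast hD
  have hd2 : (1:ℝ) ≤ (D:ℝ) - 2 := by linarith
  have hd2' : ((D:ℝ) - 2) ≠ 0 := by linarith
  have hd0 : (0:ℝ) < (D:ℝ) := by linarith
  set δ : ℝ := (8:ℝ) ^ (-(((D:ℝ)-2)/4)) with hδdef
  have hδpos : 0 < δ := Real.rpow_pos_of_pos (by norm_num) _
  clear_value δ
  refine ⟨δ, hδpos, 1/20, by norm_num, ?_⟩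
  intro v R hR hv hInt hIntP hδN
  -- continuity / measurability
  have hcv : ContinuousOn v (Ioi R) :=
    (hv.continuousOn).mono (Ioi_subset_Ioi hR.le)
  have amv : AEMeasurable v (volume.restrict (Ioi R)) :=
    (hcv.aestronglyMeasurable measurableSet_Ioi).aemeasurable
  have amnv : AEMeasurable (fun r => ‖v r‖) (volume.restrict (Ioi R)) := amv.norm
  have amvre : AEMeasurable (fun r => (v r).re) (volume.restrict (Ioi R)) :=
    Complex.measurable_re.comp_aemeasurable amv
  have amvim : AEMeasurable (fun r => (v r).im) (volume.restrict (Ioi R)) :=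
    Complex.measurable_im.comp_aemeasurable amv
  have mdre : Measurable (fun r => (deriv v r).re) :=
    Complex.measurable_re.comp (measurable_deriv v)
  have mdim : Measurable (fun r => (deriv v r).im) :=
    Complex.measurable_im.comp (measurable_deriv v)
  have mrp : ∀ c : ℝ, Measurable (fun r : ℝ => r ^ c) := by
    intro c; fun_prop
  have amF1 : AEMeasurable (F1 D v) (volume.restrict (Ioi R)) := by
    unfold F1
    exact (((measurable_deriv v).norm.pow_const 2).mul (mrp _)).aemeasurable
  have amF2 : AEMeasurable (F2 D v) (volume.restrict (Ioi R)) := by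
    unfold F2
    exact (amnv.pow_const 2).mul (mrp _).aemeasurable
  have amGD : AEMeasurable (GD D v) (volume.restrict (Ioi R)) := by
    unfold GD
    exact ((((mdre.aemeasurable.mul amvre).add (amvre.mul mdre.aemeasurable)).add
      ((mdim.aemeasurable.mul amvim).add (amvim.mul mdim.aemeasurable))).mul
        (mrp _).aemeasurable).add
      (((amvre.mul amvre).add (amvim.mul amvim)).mul
        ((measurable_const.mul (mrp _)).aemeasurable))
  -- splitting of the energy density
  have h_split : ∀ r ∈ Ioi R, (‖deriv v r‖ ^ 2 + ‖v r‖ ^ 2 / r ^ 2) * r ^ ((D : ℝ) - 1)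
      = F1 D v r + F2 D v r := by
    intro r hr
    have hr0 : 0 < r := lt_trans hR hr
    have h2 : r ^ ((D:ℝ)-1) = r ^ ((D:ℝ)-3) * r^(2:ℕ) := by
      rw [← Real.rpow_natCast r 2, ← Real.rpow_add hr0]
      congr 1
      push_cast
      ring
    rw [F1, F2, h2]
    have hr2 : (r:ℝ)^(2:ℕ) ≠ 0 := pow_ne_zero 2 hr0.ne'
    field_simp
  -- integrability of the pieces
  have intF1 : IntegrableOn (F1 D v) (Ioi R) := by
    refine hInt.mono' amF1.aestronglyMeasurable ?_
    rw [ae_restrict_iff' measurableSet_Ioi]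
    refine ae_of_all _ fun r hr => ?_
    have hr0 : 0 < r := lt_trans hR hr
    rw [Real.norm_eq_abs, abs_of_nonneg (F1_nonneg D v hr0), h_split r hr]
    linarith [F2_nonneg D v hr0]
  have intF2 : IntegrableOn (F2 D v) (Ioi R) := by
    refine hInt.mono' amF2.aestronglyMeasurable ?_
    rw [ae_restrict_iff' measurableSet_Ioi]
    refine ae_of_all _ fun r hr => ?_
    have hr0 : 0 < r := lt_trans hR hr
    rw [Real.norm_eq_abs, abs_of_nonneg (F2_nonneg D v hr0), h_split r hr]
    linarith [F1_nonneg D v hr0]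
  have intG : IntegrableOn (GD D v) (Ioi R) := by
    refine (intF1.add (intF2.const_mul ((D:ℝ)-1))).mono' amGD.aestronglyMeasurable ?_
    rw [ae_restrict_iff' measurableSet_Ioi]
    refine ae_of_all _ fun r hr => ?_
    have hr0 : 0 < r := lt_trans hR hr
    have hc := cross_abs D v hr0 one_pos one_pos (mul_one 1)
    have h1 := abs_le.1 hc
    have h2 : |GD D v r| ≤ F1 D v r + ((D:ℝ)-1) * F2 D v r := by
      have h3 := F2_nonneg D v hr0
      rw [abs_le]
      constructor
      · nlinarith [h1.1, mul_nonneg (show (0:ℝ) ≤ 2*(D:ℝ)-4 by linarith) h3]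
      · nlinarith [h1.2, mul_nonneg (show (0:ℝ) ≤ 2*(D:ℝ)-4 by linarith) h3]
    rw [Real.norm_eq_abs]
    simpa using h2
  -- FTC and limit at infinity
  have hTendsto : ∀ a, R ≤ a →
      Tendsto (Gf D v) atTop (nhds (Gf D v a + ∫ r in Ioi a, GD D v r)) := by
    intro a ha
    have ha0 : 0 < a := lt_of_lt_of_le hR ha
    have hIntGa : IntegrableOn (GD D v) (Ioi a) := intG.mono_set (Ioi_subset_Ioi ha)
    have h1 : Tendsto (fun b => Gf D v a + ∫ r in a..b, GD D v r) atTop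
        (nhds (Gf D v a + ∫ r in Ioi a, GD D v r)) :=
      tendsto_const_nhds.add (intervalIntegral_tendsto_integral_Ioi a hIntGa tendsto_id)
    refine Tendsto.congr' ?_ h1
    filter_upwards [eventually_ge_atTop a] with b hb
    have hftc : ∫ r in a..b, GD D v r = Gf D v b - Gf D v a := by
      apply intervalIntegral.integral_eq_sub_of_hasDerivAt
      · intro x hx
        rw [uIcc_of_le hb] at hx
        exact hasDerivAt_Gf D hv (lt_of_lt_of_le ha0 hx.1)
      · rw [intervalIntegrable_iff]
        refine intG.mono_set ?_
        rw [uIoc_of_le hb]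
        exact fun x hx => lt_of_le_of_lt ha hx.1
    rw [hftc]
    ring
  have key0 := hTendsto R le_rfl
  set L := Gf D v R + ∫ r in Ioi R, GD D v r with hLdef
  have hL_nonneg : 0 ≤ L := by
    refine ge_of_tendsto key0 ?_
    filter_upwards [eventually_gt_atTop (0:ℝ)] with b hb using Gf_nonneg D v hb
  have hL0 : L = 0 := by
    by_contra hne
    have hLpos : 0 < L := hL_nonneg.lt_of_ne (Ne.symm hne)
    have hev : ∀ᶠ b in atTop, L/2 ≤ Gf D v b :=
      key0.eventually_const_le (by linarith)
    obtain ⟨T0, hT0⟩ := eventually_atTop.1 hev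
    set T := max T0 (R+1) with hTdef
    have hTR : R ≤ T := le_trans (by linarith) (le_max_right _ _)
    have hTpos : 0 < T := lt_of_lt_of_le hR hTR
    have hintT : IntegrableOn (F2 D v) (Ioi T) := intF2.mono_set (Ioi_subset_Ioi hTR)
    have hdom : IntegrableOn (fun b : ℝ => L/2 * b⁻¹) (Ioi T) := by
      refine hintT.mono' ((measurable_const.mul measurable_inv).aestronglyMeasurable) ?_
      rw [ae_restrict_iff' measurableSet_Ioi]
      refine ae_of_all _ fun b hb => ?_
      have hb0 : 0 < b := lt_trans hTpos hb
      have hbT0 : T0 ≤ b := le_trans (le_max_left _ _) (le_of_lt hb)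
      have hGf : L/2 ≤ Gf D v b := hT0 b hbT0
      rw [Real.norm_eq_abs,
        abs_of_nonneg (mul_nonneg (by linarith : (0:ℝ) ≤ L/2) (inv_nonneg.2 hb0.le)),
        F2_eq_Gf D v hb0]
      exact mul_le_mul_of_nonneg_right hGf (inv_nonneg.2 hb0.le)
    have hinv : IntegrableOn (fun b : ℝ => b⁻¹) (Ioi T) := by
      have hL' : L ≠ 0 := hLpos.ne'
      have heq : (fun b : ℝ => b⁻¹) = fun b : ℝ => (2/L) * (L/2 * b⁻¹) := by
        funext b
        field_simp
      rw [heq]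
      exact hdom.const_mul _
    have hco : IntegrableOn (fun b : ℝ => b ^ (-1:ℝ)) (Ioi T) := by
      refine hinv.congr_fun (fun b hb => ?_) measurableSet_Ioi
      rw [Real.rpow_neg_one]
    have := (integrableOn_Ioi_rpow_iff hTpos).1 hco
    norm_num at this
  have hE : ∀ a, R ≤ a → Gf D v a = - ∫ r in Ioi a, GD D v r := by
    intro a ha
    have h1 := tendsto_nhds_unique (hTendsto a ha) key0
    rw [hL0] at h1
    linarith
  -- notation for the two integrals
  set A := ∫ r in Ioi R, F1 D v r with hAdef
  set B := ∫ r in Ioi R, F2 D v r with hBdef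
  have hA0 : 0 ≤ A := setIntegral_nonneg measurableSet_Ioi
    (fun r hr => F1_nonneg D v (lt_trans hR hr))
  have hB0 : 0 ≤ B := setIntegral_nonneg measurableSet_Ioi
    (fun r hr => F2_nonneg D v (lt_trans hR hr))
  have hNsum : extNormSq D v R = A + B := by
    rw [extNormSq, setIntegral_congr_fun measurableSet_Ioi h_split, hAdef, hBdef]
    exact integral_add intF1 intF2
  have hN0 : 0 ≤ extNormSq D v R := by rw [hNsum]; linarith
  have hNδ : extNormSq D v R ≤ δ^2 := by
    calc extNormSq D v R = Real.sqrt (extNormSq D v R) ^ 2 := (Real.sq_sqrt hN0).symm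
    _ ≤ δ^2 := by
      have := Real.sqrt_nonneg (extNormSq D v R)
      nlinarith
  -- pointwise bound
  have hpt : ∀ b, R < b → ‖v b‖^2 * b^((D:ℝ)-2) ≤ extNormSq D v R := by
    intro b hb
    have hb0 : 0 < b := lt_trans hR hb
    rw [← Gf_eq, hE b hb.le]
    have hsub : Ioi b ⊆ Ioi R := Ioi_subset_Ioi hb.le
    have hIntGb : IntegrableOn (GD D v) (Ioi b) := intG.mono_set hsub
    have hintFb : IntegrableOn (fun r => F1 D v r + F2 D v r) (Ioi b) :=
      (intF1.mono_set hsub).add (intF2.mono_set hsub)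
    rw [← integral_neg]
    calc ∫ r in Ioi b, -GD D v r ≤ ∫ r in Ioi b, (F1 D v r + F2 D v r) := by
          refine setIntegral_mono_on hIntGb.neg hintFb measurableSet_Ioi ?_
          intro r hr
          have hr0 : 0 < r := lt_trans hb0 hr
          have hc := abs_le.1 (cross_abs D v hr0 one_pos one_pos (mul_one 1))
          have h3 := F2_nonneg D v hr0
          nlinarith [hc.1, mul_nonneg (show (0:ℝ) ≤ (D:ℝ)-3 by linarith) h3]
    _ ≤ ∫ r in Ioi R, (F1 D v r + F2 D v r) := by
          refine setIntegral_mono_set (intF1.add intF2) ?_ (HasSubset.Subset.eventuallyLE hsub)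
          filter_upwards [ae_restrict_mem measurableSet_Ioi] with r hr
          have hr0 : 0 < r := lt_trans hR hr
          have := F1_nonneg D v hr0
          have := F2_nonneg D v hr0
          simp only [Pi.zero_apply]
          linarith
    _ = extNormSq D v R := by
          rw [hNsum, hAdef, hBdef]
          exact integral_add intF1 intF2
  -- Hardy inequality
  have hHardy : B ≤ 4 * A := by
    have hGfR : 0 ≤ Gf D v R := Gf_nonneg D v hR
    have hIGD : ∫ r in Ioi R, GD D v r ≤ 0 := by
      have := hE R le_rfl
      linarith
    have hlow : ∫ r in Ioi R, (((D:ℝ)-2)/2 * F2 D v r - 2/((D:ℝ)-2) * F1 D v r)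
        ≤ ∫ r in Ioi R, GD D v r := by
      refine setIntegral_mono_on
        ((intF2.const_mul _).sub (intF1.const_mul _)) intG measurableSet_Ioi ?_
      intro r hr
      have hr0 : 0 < r := lt_trans hR hr
      have hν : (0:ℝ) < ((D:ℝ)-2)/2 := by linarith
      have hμ : (0:ℝ) < 2/((D:ℝ)-2) := by positivity
      have hνμ : ((D:ℝ)-2)/2 * (2/((D:ℝ)-2)) = 1 := by field_simp
      have hc := abs_le.1 (cross_abs D v hr0 hν hμ hνμ)
      have h3 := F2_nonneg D v hr0
      nlinarith [hc.1]
    rw [integral_sub (intF2.const_mul _) (intF1.const_mul _), integral_const_mul,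
      integral_const_mul, ← hAdef, ← hBdef] at hlow
    have hmain : ((D:ℝ)-2)/2 * B ≤ 2/((D:ℝ)-2) * A := by linarith
    have h1 : (1:ℝ)/2 * B ≤ ((D:ℝ)-2)/2 * B := by
      apply mul_le_mul_of_nonneg_right _ hB0
      linarith
    have h2 : 2/((D:ℝ)-2) * A ≤ 2 * A := by
      apply mul_le_mul_of_nonneg_right _ hA0
      rw [div_le_iff₀ (by linarith : (0:ℝ) < (D:ℝ)-2)]
      linarith
    linarith
  -- potential term bound
  have hpot : ∀ b ∈ Ioi R, ‖v b‖ ^ (2*(D:ℝ)/((D:ℝ)-2)) * b ^ ((D:ℝ)-1)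
      ≤ (1/8) * F2 D v b := by
    intro b hb
    have hb0 : 0 < b := lt_trans hR hb
    set n := ‖v b‖ with hndef
    have hn0 : 0 ≤ n := norm_nonneg _
    clear_value n
    have hbe0 : 0 < b ^ (((D:ℝ)-2)/2) := Real.rpow_pos_of_pos hb0 _
    have hsq : (n * b ^ (((D:ℝ)-2)/2))^2 ≤ δ^2 := by
      have h1 : b ^ (((D:ℝ)-2)/2) * b ^ (((D:ℝ)-2)/2) = b ^ ((D:ℝ)-2) := by
        rw [← Real.rpow_add hb0]; congr 1; ring
      calc (n * b ^ (((D:ℝ)-2)/2))^2 = n^2 * (b ^ (((D:ℝ)-2)/2) * b ^ (((D:ℝ)-2)/2)) := by ring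
      _ = n^2 * b ^ ((D:ℝ)-2) := by rw [h1]
      _ ≤ extNormSq D v R := by rw [hndef]; exact hpt b hb
      _ ≤ δ^2 := hNδ
    have hm : n * b ^ (((D:ℝ)-2)/2) ≤ δ := by
      nlinarith [mul_nonneg hn0 hbe0.le]
    have hnb : n ≤ δ * b ^ (-(((D:ℝ)-2)/2)) := by
      rw [Real.rpow_neg hb0.le, ← div_eq_mul_inv]
      rw [le_div_iff₀ hbe0]
      exact hm
    have hq0 : (0:ℝ) ≤ 4/((D:ℝ)-2) := by positivity
    have hrw : 2*(D:ℝ)/((D:ℝ)-2) = 2 + 4/((D:ℝ)-2) := by field_simp; ring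
    have hsplit2 : n ^ (2*(D:ℝ)/((D:ℝ)-2)) = n^2 * n ^ (4/((D:ℝ)-2)) := by
      rw [hrw, Real.rpow_add' hn0 (by positivity), Real.rpow_two]
    have hδq : δ ^ (4/((D:ℝ)-2)) = 1/8 := by
      rw [hδdef, ← Real.rpow_mul (by norm_num : (0:ℝ) ≤ 8)]
      have hex : (-(((D:ℝ)-2)/4)) * (4/((D:ℝ)-2)) = -1 := by
        field_simp
      rw [hex, Real.rpow_neg_one]
      norm_num
    have hqb : n ^ (4/((D:ℝ)-2)) ≤ (1/8) * b ^ (-(2:ℝ)) := by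
      calc n ^ (4/((D:ℝ)-2)) ≤ (δ * b ^ (-(((D:ℝ)-2)/2))) ^ (4/((D:ℝ)-2)) :=
            Real.rpow_le_rpow hn0 hnb hq0
      _ = δ ^ (4/((D:ℝ)-2)) * (b ^ (-(((D:ℝ)-2)/2))) ^ (4/((D:ℝ)-2)) :=
            Real.mul_rpow hδpos.le (Real.rpow_nonneg hb0.le _)
      _ = (1/8) * b ^ (-(2:ℝ)) := by
            rw [hδq, ← Real.rpow_mul hb0.le]
            congr 2
            field_simp
            ring
    have hbb : b ^ (-(2:ℝ)) * b ^ ((D:ℝ)-1) = b ^ ((D:ℝ)-3) := by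
      rw [← Real.rpow_add hb0]; congr 1; ring
    have hb1 : 0 ≤ b ^ ((D:ℝ)-1) := Real.rpow_nonneg hb0.le _
    calc n ^ (2*(D:ℝ)/((D:ℝ)-2)) * b ^ ((D:ℝ)-1)
        = n^2 * n ^ (4/((D:ℝ)-2)) * b ^ ((D:ℝ)-1) := by rw [hsplit2]
    _ ≤ n^2 * ((1/8) * b ^ (-(2:ℝ))) * b ^ ((D:ℝ)-1) :=
        mul_le_mul_of_nonneg_right (mul_le_mul_of_nonneg_left hqb (sq_nonneg n)) hb1
    _ = (1/8) * (n^2 * (b ^ (-(2:ℝ)) * b ^ ((D:ℝ)-1))) := by ring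
    _ = (1/8) * (n^2 * b ^ ((D:ℝ)-3)) := by rw [hbb]
    _ = (1/8) * F2 D v b := by rw [F2, hndef]
  -- potential integral bound
  set PP := ∫ r in Ioi R, ‖v r‖ ^ (2*(D:ℝ)/((D:ℝ)-2)) * r ^ ((D:ℝ)-1) with hPPdef
  have hP0 : 0 ≤ PP := by
    refine setIntegral_nonneg measurableSet_Ioi fun r hr => ?_
    have hr0 : 0 < r := lt_trans hR hr
    have h1 := Real.rpow_nonneg (norm_nonneg (v r)) (2*(D:ℝ)/((D:ℝ)-2))
    have h2 := Real.rpow_nonneg hr0.le ((D:ℝ)-1)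
    positivity
  have hPB : PP ≤ (1/8) * B := by
    calc PP ≤ ∫ r in Ioi R, (1/8) * F2 D v r :=
          setIntegral_mono_on hIntP (intF2.const_mul _) measurableSet_Ioi hpot
    _ = (1/8) * B := by rw [hBdef, integral_const_mul]
  have hEnl : extNlEnergy D v R = (1/2) * A - (((D:ℝ)-2)/(2*(D:ℝ))) * PP := by
    rw [extNlEnergy]
    have heq : EqOn
        (fun r => (‖deriv v r‖^2/2 - (((D:ℝ)-2)/(2*(D:ℝ))) *
          ‖v r‖^(2*(D:ℝ)/((D:ℝ)-2))) * r ^ ((D:ℝ)-1))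
        (fun r => (1/2) * F1 D v r - (((D:ℝ)-2)/(2*(D:ℝ))) *
          (‖v r‖^(2*(D:ℝ)/((D:ℝ)-2)) * r ^ ((D:ℝ)-1))) (Ioi R) := by
      intro r hr
      simp only [F1]
      ring
    rw [setIntegral_congr_fun measurableSet_Ioi heq,
      integral_sub (intF1.const_mul _) (hIntP.const_mul _),
      integral_const_mul, integral_const_mul, ← hAdef, ← hPPdef]
  have hcP : (((D:ℝ)-2)/(2*(D:ℝ))) * PP ≤ (1/2) * PP := by
    apply mul_le_mul_of_nonneg_right _ hP0
    rw [div_le_iff₀ (by positivity)]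
    linarith
  rw [ge_iff_le, hNsum, hEnl]
  linarith [hPB, hHardy, hA0, hB0, hP0, hcP]
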